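/- Let P be a poset and for each p ∈ P let Q_p be a poset. Let Σ_P Q_p denote the lexicographic sum: the set {(p,q) : p ∈ P, q ∈ Q_p} ordered by (p,q) ≤ (p',q') if and only if p <_P p', or p = p' and q ≤_{Q_p} q'. Then dim(Σ_P Q_p) equals the supremum of the set {dim(P)} ∪ {dim(Q_p) : p ∈ P}. -/

import Mathlib

universe u


/-- If `¬ x ≤ y`, there is a linear extension `s` of `≤` with `s y x` and `¬ s x y`. -/
theorem exists_linext_flip {α : Type u} [PartialOrder α] {x y : α} (hxy : ¬ x ≤ y) :
    ∃ s : α → α → Prop, IsLinearOrder α s ∧ ((· ≤ ·) : α → α → Prop) ≤ s ∧ ¬ s x y := by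
  set r : α → α → Prop := fun a b => a ≤ b ∨ (a ≤ y ∧ x ≤ b) with hr
  haveI : IsPartialOrder α r := by
    refine { refl := fun a => Or.inl le_rfl, trans := ?_, antisymm := ?_ }
    · rintro a b c (hab | ⟨hay, hxb⟩) (hbc | ⟨hby, hxc⟩)
      · exact Or.inl (hab.trans hbc)
      · exact Or.inr ⟨hab.trans hby, hxc⟩
      · exact Or.inr ⟨hay, hxb.trans hbc⟩
      · exact Or.inr ⟨hay, hxc⟩
    · rintro a b (hab | ⟨hay, hxb⟩) (hba | ⟨hby, hxa⟩)
      · exact le_antisymm hab hba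
      · exact absurd ((hxa.trans hab).trans hby) hxy
      · exact absurd ((hxb.trans hba).trans hay) hxy
      · exact absurd (hxa.trans hay) hxy
  obtain ⟨s, hs, hrs⟩ := extend_partialOrder r
  refine ⟨s, hs, fun a b hab => hrs a b (Or.inl hab), fun hsxy => ?_⟩
  haveI := hs
  have hsyx : s y x := hrs y x (Or.inr ⟨le_rfl, le_rfl⟩)
  exact hxy (Std.Antisymm.antisymm x y hsxy hsyx ▸ le_rfl)

theorem realizer_set_nonempty (α : Type u) [PartialOrder α] :
    {κ : Cardinal.{u} | ∃ (ι : Type u) (r : ι → α → α → Prop),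
      (∀ i, IsLinearOrder α (r i)) ∧
      (∀ x y : α, x ≤ y ↔ ∀ i, r i x y) ∧
      Cardinal.mk ι = κ}.Nonempty := by
  refine ⟨_, {s : α → α → Prop // IsLinearOrder α s ∧ ((· ≤ ·) : α → α → Prop) ≤ s},
    Subtype.val, fun i => i.2.1, fun x y => ⟨fun h i => i.2.2 x y h, fun h => ?_⟩, rfl⟩
  by_contra hxy
  obtain ⟨s, hs, hle, hn⟩ := exists_linext_flip hxy
  exact hn (h ⟨s, hs, hle⟩)

/-- The order dimension of a poset: the least cardinal `κ` such that the partial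
order is the intersection of `κ` linear orderings (each extending it). -/
noncomputable def orderDim (α : Type u) [PartialOrder α] : Cardinal.{u} :=
  sInf {κ : Cardinal.{u} | ∃ (ι : Type u) (r : ι → α → α → Prop),
    (∀ i, IsLinearOrder α (r i)) ∧
    (∀ x y : α, x ≤ y ↔ ∀ i, r i x y) ∧
    Cardinal.mk ι = κ}



theorem orderDim_spec (α : Type u) [PartialOrder α] :
    ∃ (ι : Type u) (r : ι → α → α → Prop),
      (∀ i, IsLinearOrder α (r i)) ∧
      (∀ x y : α, x ≤ y ↔ ∀ i, r i x y) ∧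
      Cardinal.mk ι = orderDim α :=
  csInf_mem (realizer_set_nonempty α)

theorem orderDim_le {α : Type u} [PartialOrder α] {ι : Type u} (r : ι → α → α → Prop)
    (h1 : ∀ i, IsLinearOrder α (r i)) (h2 : ∀ x y : α, x ≤ y ↔ ∀ i, r i x y) :
    orderDim α ≤ Cardinal.mk ι :=
  csInf_le' ⟨ι, r, h1, h2, rfl⟩

theorem exists_realizer {α : Type u} [PartialOrder α] {ι : Type u}
    (h : orderDim α ≤ Cardinal.mk ι) :
    ∃ r : ι → α → α → Prop, (∀ i, IsLinearOrder α (r i)) ∧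
      (∀ x y : α, x ≤ y ↔ ∀ i, r i x y) := by
  classical
  obtain ⟨ι₀, r₀, h1, h2, hcard⟩ := orderDim_spec α
  obtain ⟨f⟩ := (Cardinal.le_def ι₀ ι).mp (hcard.trans_le h)
  obtain ⟨s, hs, hle⟩ := extend_partialOrder ((· ≤ ·) : α → α → Prop)
  refine ⟨fun i => if h : ∃ j, f j = i then r₀ h.choose else s, fun i => ?_, fun x y => ?_⟩
  · by_cases hh : ∃ j, f j = i
    · simp only [dif_pos hh]; exact h1 _
    · simp only [dif_neg hh]; exact hs
  · constructor
    · intro hxy i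
      by_cases hh : ∃ j, f j = i
      · simp only [dif_pos hh]; exact (h2 x y).mp hxy _
      · simp only [dif_neg hh]; exact hle x y hxy
    · intro h'
      refine (h2 x y).mpr fun j => ?_
      have hj : ∃ j', f j' = f j := ⟨j, rfl⟩
      have := h' (f j)
      simp only [dif_pos hj] at this
      rwa [f.injective hj.choose_spec] at this

theorem orderDim_le_of_embedding {α β : Type u} [PartialOrder α] [PartialOrder β]
    (f : α ↪o β) : orderDim α ≤ orderDim β := by
  obtain ⟨ι, r, h1, h2, hc⟩ := orderDim_spec β
  rw [← hc]
  refine orderDim_le (fun i x y => r i (f x) (f y)) (fun i => ?_) (fun x y => ?_)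
  · haveI := h1 i
    exact { refl := fun a => Std.Refl.refl _,
            trans := fun a b c hab hbc => IsTrans.trans _ _ _ hab hbc,
            antisymm := fun a b hab hba => f.injective (Std.Antisymm.antisymm _ _ hab hba),
            total := fun a b => Std.Total.total _ _ }
  · rw [← f.le_iff_le, h2]

theorem stmt12 (P : Type u) [PartialOrder P] [Nonempty P]
    (Q : P → Type u) [∀ p, PartialOrder (Q p)] [∀ p, Nonempty (Q p)] :
    orderDim (Σₗ p, Q p) =
      sSup (insert (orderDim P) (Set.range fun p => orderDim (Q p))) := by
  classical
  have hbdd : BddAbove (insert (orderDim P) (Set.range fun p => orderDim (Q p))) :=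
    (Cardinal.bddAbove_range _).insert _
  apply le_antisymm
  · -- upper bound
    set κ := sSup (insert (orderDim P) (Set.range fun p => orderDim (Q p))) with hκ
    let ι := Quotient.out κ
    have hι : Cardinal.mk ι = κ := Cardinal.mk_out κ
    have hPle : orderDim P ≤ Cardinal.mk ι := by
      rw [hι]; exact le_csSup hbdd (Set.mem_insert _ _)
    obtain ⟨rP, hP1, hP2⟩ := exists_realizer hPle
    have hQle : ∀ p, orderDim (Q p) ≤ Cardinal.mk ι := fun p => by
      rw [hι]; exact le_csSup hbdd (Set.mem_insert_of_mem _ ⟨p, rfl⟩)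
    choose rQ hQ1 hQ2 using fun p => exists_realizer (hQle p)
    rw [← hι]
    refine orderDim_le
      (fun i a b => Sigma.Lex (fun p p' => p ≠ p' ∧ rP i p p') (fun p => rQ p i)
        (ofLex a) (ofLex b)) (fun i => ?_) (fun x y => ?_)
    · haveI := hP1 i
      haveI : ∀ p, IsLinearOrder (Q p) (rQ p i) := fun p => hQ1 p i
      refine { refl := ?_, trans := ?_, antisymm := ?_, total := ?_ }
      · rintro ⟨p, q⟩
        exact Sigma.Lex.right _ _ (refl_of (rQ p i) q)
      · rintro ⟨p, q⟩ ⟨p', q'⟩ ⟨p'', q''⟩ hab hbc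
        rcases hab with ⟨_, _, hne, hr⟩ | ⟨_, _, hs⟩
        · rcases hbc with ⟨_, _, hne', hr'⟩ | ⟨_, _, hs'⟩
          · refine Sigma.Lex.left _ _ ⟨fun e => ?_, trans_of (rP i) hr hr'⟩
            exact hne (antisymm hr (e ▸ hr'))
          · exact Sigma.Lex.left _ _ ⟨hne, hr⟩
        · rcases hbc with ⟨_, _, hne', hr'⟩ | ⟨_, _, hs'⟩
          · exact Sigma.Lex.left _ _ ⟨hne', hr'⟩
          · exact Sigma.Lex.right _ _ (trans_of (rQ p i) hs hs')
      · rintro ⟨p, q⟩ ⟨p', q'⟩ hab hba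
        rcases hab with ⟨_, _, hne, hr⟩ | ⟨_, _, hs⟩
        · rcases hba with ⟨_, _, hne', hr'⟩ | ⟨_, _, hs'⟩
          · exact absurd (antisymm hr hr') hne
          · exact absurd rfl hne
        · rcases hba with ⟨_, _, hne', hr'⟩ | ⟨_, _, hs'⟩
          · exact absurd rfl hne'
          · have := antisymm hs hs'
            subst this; rfl
      · rintro ⟨p, q⟩ ⟨p', q'⟩
        by_cases hpp : p = p'
        · subst hpp
          rcases total_of (rQ p i) q q' with h | h
          · exact Or.inl (Sigma.Lex.right _ _ h)
          · exact Or.inr (Sigma.Lex.right _ _ h)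
        · rcases total_of (rP i) p p' with h | h
          · exact Or.inl (Sigma.Lex.left _ _ ⟨hpp, h⟩)
          · exact Or.inr (Sigma.Lex.left _ _ ⟨fun e => hpp e.symm, h⟩)
    · obtain ⟨p, q⟩ := x
      obtain ⟨p', q'⟩ := y
      constructor
      · intro h i
        rcases h with ⟨_, _, hlt⟩ | ⟨_, b, hq⟩
        · exact Sigma.Lex.left _ _ ⟨hlt.ne, (hP2 p p').mp hlt.le i⟩
        · exact Sigma.Lex.right _ _ ((hQ2 p q b).mp hq i)
      · intro h
        by_cases hpp : p = p'
        · subst hpp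
          have hq : ∀ i, rQ p i q q' := by
            intro i
            rcases h i with ⟨_, _, hne, _⟩ | ⟨_, _, hs⟩
            · exact absurd rfl hne
            · exact hs
          exact Sigma.Lex.right _ _ ((hQ2 p q q').mpr hq)
        · have hr : ∀ i, rP i p p' := by
            intro i
            rcases h i with ⟨_, _, _, hr⟩ | ⟨_, _, _⟩
            · exact hr
            · exact absurd rfl hpp
          exact Sigma.Lex.left _ _ (lt_of_le_of_ne ((hP2 p p').mpr hr) hpp)
  · -- lower bound
    refine csSup_le ⟨_, Set.mem_insert _ _⟩ ?_
    intro c hc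
    rcases hc with rfl | ⟨p, rfl⟩
    · refine orderDim_le_of_embedding (OrderEmbedding.ofMapLEIff
        (fun p => toLex ⟨p, Classical.arbitrary (Q p)⟩) fun a b => ?_)
      constructor
      · rintro (⟨_, _, h⟩ | ⟨_, _, h⟩)
        · exact h.le
        · exact le_rfl
      · intro h
        rcases h.lt_or_eq with h | rfl
        · exact Sigma.Lex.left _ _ h
        · exact Sigma.Lex.right _ _ le_rfl
    · refine orderDim_le_of_embedding (OrderEmbedding.ofMapLEIff
        (fun q : Q p => toLex ⟨p, q⟩) fun a b => ?_)
      constructor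
      · rintro (⟨_, _, h⟩ | ⟨_, _, h⟩)
        · exact absurd h (lt_irrefl p)
        · exact h
      · intro h
        exact Sigma.Lex.right _ _ h
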